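/- Let A = ⊕_{n∈ℤ} Aₙ be a ℤ-graded commutative Noetherian ring. Then the canonical diagonal map A → ∏_m A_m, where m ranges over all graded maximal ideals of A, is injective. In particular, if the localization A_m is a reduced ring for every graded maximal ideal m of A, then A is reduced. -/

import Mathlib

open DirectSum Finset
attribute [local instance] Classical.propDecidable

section aux
variable {A : Type*} [CommRing A] (𝒜 : ℤ → AddSubgroup A) [GradedRing 𝒜]

lemma proj_mul_bound_zero (a y : A) (i j : ℤ)
    (ha : ∀ k ∈ (decompose 𝒜 a).support, k ≤ i)
    (hy : ∀ l ∈ (decompose 𝒜 y).support, l < j) :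
    (decompose 𝒜 (a * y) (i + j) : A) = 0 := by
  classical
  rw [decompose_mul, DirectSum.coe_mul_apply]
  apply Finset.sum_eq_zero
  rintro ⟨k, l⟩ h
  rw [Finset.mem_filter, Finset.mem_product] at h
  have h1 := ha _ h.1.1
  have h2 := hy _ h.1.2
  exact absurd h.2 (by omega)

lemma pow_top_mul_eq_zero (a : A) (i : ℤ)
    (ha : ∀ k ∈ (decompose 𝒜 a).support, k ≤ i) :
    ∀ (n : ℕ) (y : A), (decompose 𝒜 y).support.card ≤ n → a * y = 0 →
      ((decompose 𝒜 a i : A)) ^ n * y = 0 := by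
  classical
  intro n
  induction n with
  | zero =>
    intro y hcard hay
    have hsupp : (decompose 𝒜 y).support = ∅ := Finset.card_eq_zero.mp (Nat.le_zero.mp hcard)
    have hy : y = 0 := by
      rw [← DirectSum.sum_support_decompose 𝒜 y, hsupp, Finset.sum_empty]
    simp [hy]
  | succ n ih =>
    intro y hcard hay
    by_cases hy0 : y = 0
    · simp [hy0]
    set c : A := (decompose 𝒜 a i : A) with hc
    have hcmem : c ∈ 𝒜 i := SetLike.coe_mem _
    have hsupp : (decompose 𝒜 y).support.Nonempty := by
      rw [Finset.nonempty_iff_ne_empty]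
      intro h
      exact hy0 (by rw [← DirectSum.sum_support_decompose 𝒜 y, h, Finset.sum_empty])
    set j := (decompose 𝒜 y).support.max' hsupp with hj
    -- the top component of y is killed by c
    have key : c * (decompose 𝒜 y j : A) = 0 := by
      have e : a * (decompose 𝒜 y j : A) = -(a * (y - (decompose 𝒜 y j : A))) := by
        linear_combination hay
      have h2 : (decompose 𝒜 (a * (decompose 𝒜 y j : A)) (i + j) : A)
          = c * (decompose 𝒜 y j : A) := by
        rw [DirectSum.coe_decompose_mul_add_of_right_mem 𝒜 (SetLike.coe_mem _)]
      have h3 : (decompose 𝒜 (a * (y - (decompose 𝒜 y j : A))) (i + j) : A) = 0 := by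
        apply proj_mul_bound_zero 𝒜 _ _ i j ha
        intro l hl
        have hl' : decompose 𝒜 (y - (decompose 𝒜 y j : A)) l ≠ 0 :=
          DFinsupp.mem_support_iff.mp hl
        rw [decompose_sub, decompose_coe] at hl'
        by_cases hlj : l = j
        · subst hlj
          exfalso
          apply hl'
          rw [DirectSum.sub_apply, DirectSum.of_eq_same, sub_self]
        · have hly : l ∈ (decompose 𝒜 y).support := by
            rw [DFinsupp.mem_support_iff]
            intro h0
            apply hl'
            rw [DirectSum.sub_apply, DirectSum.of_eq_of_ne _ _ _ hlj, h0, sub_zero]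
          exact lt_of_le_of_ne (Finset.le_max' _ _ hly) hlj
      rw [← h2, e, decompose_neg, DFinsupp.neg_apply, NegMemClass.coe_neg, h3, neg_zero]
    -- the multiple c * y has smaller support
    have hcard' : (decompose 𝒜 (c * y)).support.card ≤ n := by
      have hproj : ∀ m : ℤ, (decompose 𝒜 (c * y) m : A) = c * (decompose 𝒜 y (m - i) : A) := by
        intro m
        have : m = i + (m - i) := by ring
        conv_lhs => rw [this, DirectSum.coe_decompose_mul_add_of_left_mem 𝒜 hcmem]
      have hsub : (decompose 𝒜 (c * y)).support ⊆
          ((decompose 𝒜 y).support.erase j).image (fun l => i + l) := by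
        intro m hm
        have hm' : (decompose 𝒜 (c * y) m : A) ≠ 0 := by
          intro h0
          apply DFinsupp.mem_support_iff.mp hm
          exact Subtype.ext h0
        rw [hproj m] at hm'
        rw [Finset.mem_image]
        refine ⟨m - i, Finset.mem_erase.mpr ⟨?_, ?_⟩, by ring⟩
        · intro h0
          rw [h0] at hm'
          exact hm' key
        · rw [DFinsupp.mem_support_iff]
          intro h0
          apply hm'
          rw [h0, ZeroMemClass.coe_zero, mul_zero]
      calc (decompose 𝒜 (c * y)).support.card
          ≤ (((decompose 𝒜 y).support.erase j).image (fun l => i + l)).card :=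
            Finset.card_le_card hsub
        _ ≤ ((decompose 𝒜 y).support.erase j).card := Finset.card_image_le
        _ = (decompose 𝒜 y).support.card - 1 :=
            Finset.card_erase_of_mem (Finset.max'_mem _ _)
        _ ≤ n := by omega
    have hay' : a * (c * y) = 0 := by
      have : a * (c * y) = c * (a * y) := by ring
      rw [this, hay, mul_zero]
    have := ih (c * y) hcard' hay'
    calc c ^ (n + 1) * y = c ^ n * (c * y) := by ring
      _ = 0 := this

end aux

/-- For a `ℤ`-graded ring `A = ⊕_{n ∈ ℤ} Aₙ`, an ideal `𝔪` is a *graded maximal ideal*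
if it is homogeneous, proper, and maximal among proper homogeneous ideals. -/
def IsGradedMaximalIdeal {A : Type*} [CommRing A] (𝒜 : ℤ → AddSubgroup A) [GradedRing 𝒜]
    (m : Ideal A) : Prop :=
  m.IsHomogeneous 𝒜 ∧ m ≠ ⊤ ∧
    ∀ J : Ideal A, J.IsHomogeneous 𝒜 → J ≠ ⊤ → m ≤ J → J = m

/-- for a `ℤ`-graded Noetherian ring `A`, the canonical diagonal map
`A → ∏_𝔪 A_𝔪`, where `𝔪` ranges over the graded maximal ideals of `A` (which are
automatically prime, whence the primality instance), is injective; in particular, if every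
localization `A_𝔪` is reduced then `A` is reduced. -/
theorem injective_diagonal_to_localizations_at_gradedMaximal
    (A : Type*) [CommRing A] [IsNoetherianRing A]
    (𝒜 : ℤ → AddSubgroup A) [GradedRing 𝒜] :
    (∀ x : A, (∀ (m : Ideal A), IsGradedMaximalIdeal 𝒜 m →
        ∀ [m.IsPrime], algebraMap A (Localization.AtPrime m) x = 0) → x = 0) ∧
      ((∀ (m : Ideal A), IsGradedMaximalIdeal 𝒜 m →
        ∀ [m.IsPrime], IsReduced (Localization.AtPrime m)) → IsReduced A) := by
  classical
  have hnoeth : ∀ S : Set (Ideal A), S.Nonempty → ∃ P ∈ S, ∀ I ∈ S, ¬P < I :=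
    set_has_maximal_iff_noetherian.mpr (inferInstance : IsNoetherian A A)
  have main : ∀ x : A, (∀ (m : Ideal A), IsGradedMaximalIdeal 𝒜 m →
      ∀ [m.IsPrime], algebraMap A (Localization.AtPrime m) x = 0) → x = 0 := by
    intro x hx
    by_contra hx0
    set S : Set (Ideal A) := {I | ∃ r : A, r * x ≠ 0 ∧ I = Ideal.torsionOf A A (r * x)} with hS
    have hSne : S.Nonempty := ⟨Ideal.torsionOf A A (1 * x), 1, by simpa using hx0, rfl⟩
    obtain ⟨P, hPS, hPmax⟩ := hnoeth S hSne
    obtain ⟨r, hrx, rfl⟩ := hPS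
    set y := r * x with hy
    set P := Ideal.torsionOf A A y with hP
    have hmem : ∀ a : A, a ∈ P ↔ a * y = 0 := fun a => by
      rw [hP, Ideal.mem_torsionOf_iff, smul_eq_mul]
    have hPne : P ≠ ⊤ := by
      intro h
      apply hrx
      have h1 : (1 : A) ∈ P := by rw [h]; trivial
      simpa using (hmem 1).mp h1
    have hmax' : ∀ z : A, z * y ≠ 0 → Ideal.torsionOf A A (z * y) = P := by
      intro z hz
      have hle : P ≤ Ideal.torsionOf A A (z * y) := by
        intro c hc
        rw [Ideal.mem_torsionOf_iff, smul_eq_mul]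
        rw [hmem] at hc
        calc c * (z * y) = z * (c * y) := by ring
          _ = 0 := by rw [hc, mul_zero]
      have hmem2 : Ideal.torsionOf A A (z * y) ∈ S :=
        ⟨z * r, by rwa [mul_assoc, ← hy], by rw [mul_assoc, ← hy]⟩
      by_contra hne
      exact hPmax _ hmem2 (lt_of_le_of_ne hle (Ne.symm hne))
    have hPprime : P.IsPrime := by
      constructor
      · exact hPne
      · intro u v huv
        by_cases hv : v ∈ P
        · exact Or.inr hv
        · left
          have hvy : v * y ≠ 0 := by rwa [hmem] at hv
          rw [← hmax' v hvy, Ideal.mem_torsionOf_iff, smul_eq_mul]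
        
          calc u * (v * y) = (u * v) * y := by ring
            _ = 0 := (hmem _).mp huv
    have hyne : y ≠ 0 := hrx
    have hysupp : (decompose 𝒜 y).support.Nonempty := by
      rw [Finset.nonempty_iff_ne_empty]
      intro h
      exact hyne (by rw [← DirectSum.sum_support_decompose 𝒜 y, h, Finset.sum_empty])
    -- P is homogeneous
    have claim : ∀ (n : ℕ) (a : A), (decompose 𝒜 a).support.card ≤ n → a ∈ P →
        ∀ k : ℤ, (decompose 𝒜 a k : A) ∈ P := by
      intro n
      induction n with
      | zero =>
        intro a hcard ha k
        have hsupp : (decompose 𝒜 a).support = ∅ :=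
          Finset.card_eq_zero.mp (Nat.le_zero.mp hcard)
        have : decompose 𝒜 a k = 0 := DFinsupp.notMem_support_iff.mp (by simp [hsupp])
        rw [this, ZeroMemClass.coe_zero]
        exact P.zero_mem
      | succ n ih =>
        intro a hcard ha k
        by_cases ha0 : (decompose 𝒜 a).support = ∅
        · have : decompose 𝒜 a k = 0 := DFinsupp.notMem_support_iff.mp (by simp [ha0])
          rw [this, ZeroMemClass.coe_zero]
          exact P.zero_mem
        have hane : (decompose 𝒜 a).support.Nonempty := Finset.nonempty_iff_ne_empty.mpr ha0
        set i := (decompose 𝒜 a).support.max' hane with hi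
        set c : A := (decompose 𝒜 a i : A) with hc
        have hbound : ∀ k ∈ (decompose 𝒜 a).support, k ≤ i := fun k hk => Finset.le_max' _ _ hk
        -- c ∈ P since some power of c kills y and P is prime
        have hcP : c ∈ P := by
          have hpow := pow_top_mul_eq_zero 𝒜 a i hbound
            ((decompose 𝒜 y).support.card) y le_rfl ((hmem a).mp ha)
          have hpowP : c ^ (decompose 𝒜 y).support.card ∈ P := (hmem _).mpr hpow
          exact hPprime.mem_of_pow_mem _ hpowP
        have hcy : c * y = 0 := (hmem c).mp hcP
        -- the remainder a - c has smaller support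
        have hcomp : ∀ l : ℤ, l ≠ i → decompose 𝒜 (a - c) l = decompose 𝒜 a l := by
          intro l hl
          rw [decompose_sub, hc, decompose_coe, DirectSum.sub_apply,
            DirectSum.of_eq_of_ne _ _ _ hl, sub_zero]
        have hcompi : decompose 𝒜 (a - c) i = 0 := by
          rw [decompose_sub, hc, decompose_coe, DirectSum.sub_apply,
            DirectSum.of_eq_same, sub_self]
        have hsub : (decompose 𝒜 (a - c)).support ⊆ (decompose 𝒜 a).support.erase i := by
          intro l hl
          have hl' := DFinsupp.mem_support_iff.mp hl
          have hli : l ≠ i := by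
            intro h; rw [h, hcompi] at hl'; exact hl' rfl
          refine Finset.mem_erase.mpr ⟨hli, ?_⟩
          rw [DFinsupp.mem_support_iff]
          rw [hcomp l hli] at hl'
          exact hl'
        have hcard' : (decompose 𝒜 (a - c)).support.card ≤ n := by
          calc (decompose 𝒜 (a - c)).support.card
              ≤ ((decompose 𝒜 a).support.erase i).card := Finset.card_le_card hsub
            _ = (decompose 𝒜 a).support.card - 1 :=
                Finset.card_erase_of_mem (Finset.max'_mem _ _)
            _ ≤ n := by
                have h1 : 1 ≤ (decompose 𝒜 a).support.card := Finset.card_pos.mpr hane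
                omega
        have haP : a - c ∈ P := P.sub_mem ha hcP
        have := ih (a - c) hcard' haP
        by_cases hki : k = i
        · rw [hki, ← hc]; exact hcP
        · have := this k
          rw [hcomp k hki] at this
          exact this
    have hPhom : P.IsHomogeneous 𝒜 := by
      intro i a ha
      exact claim ((decompose 𝒜 a).support.card) a le_rfl ha i
    -- choose a graded maximal ideal containing P
    set S2 : Set (Ideal A) := {J | J.IsHomogeneous 𝒜 ∧ J ≠ ⊤ ∧ P ≤ J} with hS2
    have hS2ne : S2.Nonempty := ⟨P, hPhom, hPne, le_rfl⟩
    obtain ⟨m, hmS2, hmmax⟩ := hnoeth S2 hS2ne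
    obtain ⟨hmhom, hmne, hPm⟩ := hmS2
    have hgm : IsGradedMaximalIdeal 𝒜 m := by
      refine ⟨hmhom, hmne, fun J hJ hJt hmJ => ?_⟩
      by_contra hne
      exact hmmax J ⟨hJ, hJt, hPm.trans hmJ⟩ (lt_of_le_of_ne hmJ (Ne.symm hne))
    -- m is prime
    have hsup_top : ∀ u : A, SetLike.IsHomogeneousElem 𝒜 u → u ∉ m → m ⊔ Ideal.span {u} = ⊤ := by
      intro u hu hu'
      by_contra hne
      have hhom : (m ⊔ Ideal.span {u}).IsHomogeneous 𝒜 :=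
        hmhom.sup (Ideal.homogeneous_span 𝒜 _ (by
          rintro z hz
          rw [Set.mem_singleton_iff] at hz
          subst hz
          exact hu))
      have heq : m ⊔ Ideal.span {u} = m := hgm.2.2 _ hhom hne le_sup_left
      exact hu' (heq ▸ Ideal.mem_sup_right (Ideal.subset_span rfl))
    have hmprime : m.IsPrime := by
      apply hmhom.isPrime_of_homogeneous_mem_or_mem hmne
      intro u v hu hv huv
      by_contra hcon
      push_neg at hcon
      obtain ⟨hu', hv'⟩ := hcon
      have h1 := hsup_top u hu hu'
      have h2 := hsup_top v hv hv'
      obtain ⟨p, hp, w1, hw1, hpw1⟩ :=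
        Submodule.mem_sup.mp (h1 ▸ Submodule.mem_top : (1 : A) ∈ m ⊔ Ideal.span {u})
      obtain ⟨q, hq, w2, hw2, hqw2⟩ :=
        Submodule.mem_sup.mp (h2 ▸ Submodule.mem_top : (1 : A) ∈ m ⊔ Ideal.span {v})
      obtain ⟨cu, hcu⟩ := Ideal.mem_span_singleton'.mp hw1
      obtain ⟨cv, hcv⟩ := Ideal.mem_span_singleton'.mp hw2
      have hone : (1 : A) = p * q + (p * (cv * v) + ((cu * u) * q + (cu * cv) * (u * v))) := by
        rw [← hcu] at hpw1
        rw [← hcv] at hqw2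
        calc (1 : A) = (p + cu * u) * (q + cv * v) := by rw [hpw1, hqw2, one_mul]
          _ = p * q + (p * (cv * v) + ((cu * u) * q + (cu * cv) * (u * v))) := by ring
      have : (1 : A) ∈ m := by
        rw [hone]
        exact add_mem (Ideal.mul_mem_right _ _ hp)
          (add_mem (Ideal.mul_mem_right _ _ hp)
            (add_mem (Ideal.mul_mem_left _ _ hq) (Ideal.mul_mem_left _ _ huv)))
      exact hmne ((Ideal.eq_top_iff_one m).mpr this)
    haveI := hmprime
    have h0 := hx m hgm
    rw [IsLocalization.map_eq_zero_iff m.primeCompl] at h0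
    obtain ⟨⟨s, hs⟩, hsx⟩ := h0
    have hsP : s ∈ P := by
      rw [hmem, hy]
      calc s * (r * x) = r * (s * x) := by ring
        _ = 0 := by rw [hsx, mul_zero]
    exact hs (hPm hsP)
  refine ⟨main, fun h => ⟨fun x hx => main x ?_⟩⟩
  intro m hm hmp
  haveI := hmp
  haveI := h m hm
  exact (hx.map (algebraMap A (Localization.AtPrime m))).eq_zero
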